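/- Let M be a real n×n matrix, B = -Mᵀ, and suppose D is a diagonal matrix with positive diagonal entries such that D B⁻¹ is symmetric. If position μ' is obtained from μ by legally firing node i (so μ' = μ + μ_i B e_i with μ_i > 0 and M_{ii} = 2), then μ'ᵀ D B⁻¹ μ' = μᵀ D B⁻¹ μ; i.e., the quadratic form μ ↦ μᵀ D B⁻¹ μ is invariant under legal node firings. -/

import Mathlib

open Matrix

/-- Let `M` have diagonal entries 2, `B = -Mᵀ` be invertible, and `D` be a diagonal
matrix with positive diagonal entries such that `D B⁻¹` is symmetric.  If `μ'` is
obtained from `μ` by legally firing node `i` (so `μ'_j = μ_j - M_{ij} μ_i`, i.e.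
`μ' = μ + μ_i B e_i`, with `μ_i > 0`), then the quadratic form
`x ↦ xᵀ D B⁻¹ x` takes the same value at `μ'` as at `μ`. -/
theorem stmt7 {n : ℕ} (M : Matrix (Fin n) (Fin n) ℝ) (hdiag : ∀ i, M i i = 2)
    (hinv : IsUnit (-Mᵀ).det)
    (D : Matrix (Fin n) (Fin n) ℝ) (hDoff : ∀ i j, i ≠ j → D i j = 0)
    (hDpos : ∀ i, 0 < D i i) (hsymm : (D * (-Mᵀ)⁻¹).IsSymm)
    (μ : Fin n → ℝ) (i : Fin n) (hi : 0 < μ i) :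
    dotProduct (fun j => μ j - M i j * μ i)
        ((D * (-Mᵀ)⁻¹).mulVec (fun j => μ j - M i j * μ i)) =
      dotProduct μ ((D * (-Mᵀ)⁻¹).mulVec μ) := by
  set B : Matrix (Fin n) (Fin n) ℝ := -Mᵀ with hB
  set A : Matrix (Fin n) (Fin n) ℝ := D * B⁻¹ with hA
  have hAB : A * B = D := by
    rw [hA, Matrix.mul_assoc, Matrix.nonsing_inv_mul _ hinv, Matrix.mul_one]
  have hAsymm : Aᵀ = A := hsymm
  set u : Fin n → ℝ := Pi.single i (μ i) with hu
  set w : Fin n → ℝ := B.mulVec u with hw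
  have hwj : ∀ j, w j = B j i * μ i := by
    intro j
    simp [hw, hu, Matrix.mulVec_single]
    ring
  have hvec : (fun j => μ j - M i j * μ i) = μ + w := by
    funext j
    have := hwj j
    simp [this, hB]
    ring
  have hABu : A.mulVec w = D.mulVec u := by
    rw [hw, Matrix.mulVec_mulVec, hAB]
  have hDu : ∀ j, D.mulVec u j = D j i * μ i := by
    intro j; simp [hu, Matrix.mulVec_single]
  -- dot products with D.mulVec u pick out the i-th coordinate
  have hdot : ∀ v : Fin n → ℝ, dotProduct v (D.mulVec u) = v i * D i i * μ i := by
    intro v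
    rw [dotProduct]
    rw [Finset.sum_eq_single i]
    · rw [hDu]; ring
    · intro b _ hb
      rw [hDu, hDoff b i hb]; ring
    · intro h; exact absurd (Finset.mem_univ i) h
  have h1 : dotProduct μ (A.mulVec w) = μ i * D i i * μ i := by
    rw [hABu, hdot]
  have h2 : dotProduct w (A.mulVec μ) = μ i * D i i * μ i := by
    rw [Matrix.dotProduct_mulVec, ← Matrix.mulVec_transpose, hAsymm,
      dotProduct_comm]
    exact h1
  have h3 : dotProduct w (A.mulVec w) = -2 * (μ i * D i i * μ i) := by
    rw [hABu, hdot, hwj]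
    have : B i i = -2 := by simp [hB, hdiag i]
    rw [this]; ring
  rw [hvec, Matrix.mulVec_add, dotProduct_add, add_dotProduct,
    add_dotProduct]
  rw [h1, h2, h3]
  ring
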